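/- Let λ>0, α>0 and C, D ∈ ℝ, and define U(x) = (2λ/α)x + C·e^{x√(2α)} + D·e^{−x√(2α)}. (i) If the derivative U' has two distinct real zeros, then C < 0, C·D < 0, and U' is strictly concave on ℝ. (ii) Consequently, if U'(G) > 0 for some G ∈ ℝ, then U' has at most one zero in the interval (−∞, G); in particular U has at most one turning point in any interval (F, G) with F < G. -/

import Mathlib

/-- Algebra helper: two distinct positive roots of the quadratic `C*s*u^2 + k*u - D*s`
force `C < 0` and `0 < D`. -/
lemma quad_aux (s k C D u₁ u₂ : ℝ) (hs : 0 < s) (hk : 0 < k)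
    (hu1 : 0 < u₁) (hu2 : 0 < u₂) (hne : u₁ ≠ u₂)
    (q1 : C * s * u₁ ^ 2 + k * u₁ - D * s = 0)
    (q2 : C * s * u₂ ^ 2 + k * u₂ - D * s = 0) :
    C < 0 ∧ 0 < D := by
  have hsum : C * s * (u₁ + u₂) + k = 0 := by
    have hf : (u₁ - u₂) * (C * s * (u₁ + u₂) + k) = 0 := by linear_combination q1 - q2
    rcases mul_eq_zero.1 hf with h | h
    · exact absurd (sub_eq_zero.1 h) hne
    · exact h
  have hC : C < 0 := by
    by_contra h
    push_neg at h
    nlinarith [mul_nonneg (mul_nonneg h hs.le) (add_pos hu1 hu2).le]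
  have hDs : D * s = -(C * s) * (u₁ * u₂) := by linear_combination u₁ * hsum - q1
  have hD : 0 < D := by
    have h1 : 0 < -(C * s) * (u₁ * u₂) :=
      mul_pos (by nlinarith) (mul_pos hu1 hu2)
    by_contra h
    push_neg at h
    nlinarith [mul_nonpos_of_nonpos_of_nonneg h hs.le]
  exact ⟨hC, hD⟩

/-- Algebra helper for part (ii): contradiction. -/
lemma quad_aux2 (s k C D u₁ u₂ uG : ℝ) (hs : 0 < s) (hk : 0 < k)
    (hu1 : 0 < u₁) (hu2 : 0 < u₂) (hne : u₁ ≠ u₂)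
    (h1G : u₁ < uG) (h2G : u₂ < uG)
    (q1 : C * s * u₁ ^ 2 + k * u₁ - D * s = 0)
    (q2 : C * s * u₂ ^ 2 + k * u₂ - D * s = 0)
    (qG : 0 < C * s * uG ^ 2 + k * uG - D * s) : False := by
  obtain ⟨hC, hD⟩ := quad_aux s k C D u₁ u₂ hs hk hu1 hu2 hne q1 q2
  have hsum : C * s * (u₁ + u₂) + k = 0 := by
    have hf : (u₁ - u₂) * (C * s * (u₁ + u₂) + k) = 0 := by linear_combination q1 - q2
    rcases mul_eq_zero.1 hf with h | h
    · exact absurd (sub_eq_zero.1 h) hne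
    · exact h
  have hDs : D * s = -(C * s) * (u₁ * u₂) := by linear_combination u₁ * hsum - q1
  have hfac : C * s * (uG - u₁) * (uG - u₂) = C * s * uG ^ 2 + k * uG - D * s := by
    linear_combination (-uG) * hsum + hDs
  have hneg : C * s * (uG - u₁) * (uG - u₂) < 0 := by
    have := mul_pos (sub_pos.2 h1G) (sub_pos.2 h2G)
    nlinarith [mul_neg_of_neg_of_pos hC hs]
  linarith [hfac ▸ hneg]

/-- if U'(x), with U(x) = (2λ/α)x + C·e^{x√(2α)} + D·e^{−x√(2α)}, has two
distinct zeros then C < 0, C·D < 0 and U' is strictly concave; consequently if U'(G) > 0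
then U' has at most one zero on (−∞,G), and in particular U has at most one turning point
in any interval (F,G). -/
theorem stmt_19 (α lam C D : ℝ) (hα : 0 < α) (hlam : 0 < lam)
    (U : ℝ → ℝ)
    (hU : ∀ x, U x = (2 * lam / α) * x + C * Real.exp (x * Real.sqrt (2 * α)) +
      D * Real.exp (-x * Real.sqrt (2 * α))) :
    ((∃ x₁ x₂ : ℝ, x₁ ≠ x₂ ∧ deriv U x₁ = 0 ∧ deriv U x₂ = 0) →
      C < 0 ∧ C * D < 0 ∧ StrictConcaveOn ℝ Set.univ (deriv U)) ∧
    (∀ G : ℝ, 0 < deriv U G →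
      (∀ x₁ ∈ Set.Iio G, ∀ x₂ ∈ Set.Iio G, deriv U x₁ = 0 → deriv U x₂ = 0 → x₁ = x₂) ∧
      ∀ F : ℝ, F < G → ∀ x₁ ∈ Set.Ioo F G, ∀ x₂ ∈ Set.Ioo F G,
        deriv U x₁ = 0 → deriv U x₂ = 0 → x₁ = x₂) := by
  set s : ℝ := Real.sqrt (2 * α) with hsdef
  have hs : 0 < s := Real.sqrt_pos.mpr (by linarith)
  set k : ℝ := 2 * lam / α with hkdef
  have hk : 0 < k := by positivity
  have hexp : ∀ (c : ℝ) (x : ℝ),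
      HasDerivAt (fun y : ℝ => Real.exp (y * c)) (c * Real.exp (x * c)) x := by
    intro c x
    have h1 : HasDerivAt (fun y : ℝ => y * c) c x := by simpa using (hasDerivAt_id x).mul_const c
    exact ((Real.hasDerivAt_exp (x * c)).comp x h1).congr_deriv (mul_comm _ _)
  have hUf : U = fun x => k * x + C * Real.exp (x * s) + D * Real.exp (x * (-s)) := by
    funext x
    rw [hU x, neg_mul, ← mul_neg]
  -- derivative of U
  have hdA : ∀ x, HasDerivAt U
      (k + C * s * Real.exp (x * s) - D * s * Real.exp (x * (-s))) x := by
    intro x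
    rw [hUf]
    have h := (((hasDerivAt_id x).const_mul k).add ((hexp s x).const_mul C)).add
      ((hexp (-s) x).const_mul D)
    exact h.congr_deriv (by ring)
  have hdU : ∀ x, deriv U x = k + C * s * Real.exp (x * s) - D * s * Real.exp (x * (-s)) :=
    fun x => (hdA x).deriv
  have hdUf : deriv U = fun x => k + C * s * Real.exp (x * s) - D * s * Real.exp (x * (-s)) :=
    funext hdU
  -- from a zero of deriv U, get a quadratic root
  have hquad : ∀ x, deriv U x = 0 →
      C * s * Real.exp (x * s) ^ 2 + k * Real.exp (x * s) - D * s = 0 := by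
    intro x hx
    rw [hdU x] at hx
    have hinv : Real.exp (x * (-s)) = (Real.exp (x * s))⁻¹ := by
      rw [mul_neg, Real.exp_neg]
    rw [hinv] at hx
    have hpos : (0 : ℝ) < Real.exp (x * s) := Real.exp_pos _
    have hi : (Real.exp (x * s))⁻¹ * Real.exp (x * s) = 1 := inv_mul_cancel₀ hpos.ne'
    linear_combination Real.exp (x * s) * hx + D * s * hi
  have hexpne : ∀ x₁ x₂ : ℝ, x₁ ≠ x₂ → Real.exp (x₁ * s) ≠ Real.exp (x₂ * s) := by
    intro x₁ x₂ hne h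
    exact hne (mul_right_cancel₀ hs.ne' (Real.exp_injective h))
  constructor
  · rintro ⟨x₁, x₂, hne, h1, h2⟩
    obtain ⟨hC, hD⟩ := quad_aux s k C D _ _ hs hk (Real.exp_pos _) (Real.exp_pos _)
      (hexpne x₁ x₂ hne) (hquad x₁ h1) (hquad x₂ h2)
    refine ⟨hC, mul_neg_of_neg_of_pos hC hD, ?_⟩
    rw [hdUf]
    apply strictConcaveOn_univ_of_deriv2_neg
    · fun_prop
    · intro x
      have hg1 : ∀ y, HasDerivAt
          (fun x => k + C * s * Real.exp (x * s) - D * s * Real.exp (x * (-s)))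
          (C * s * s * Real.exp (y * s) + D * s * s * Real.exp (y * (-s))) y := by
        intro y
        have h := ((hasDerivAt_const y k).add ((hexp s y).const_mul (C * s))).sub
          ((hexp (-s) y).const_mul (D * s))
        exact h.congr_deriv (by ring)
      have hg1f : deriv (fun x => k + C * s * Real.exp (x * s) - D * s * Real.exp (x * (-s)))
          = fun y => C * s * s * Real.exp (y * s) + D * s * s * Real.exp (y * (-s)) :=
        funext fun y => (hg1 y).deriv
      have hg2 : ∀ y, HasDerivAt
          (fun y => C * s * s * Real.exp (y * s) + D * s * s * Real.exp (y * (-s)))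
          (C * s * s * s * Real.exp (y * s) - D * s * s * s * Real.exp (y * (-s))) y := by
        intro y
        have h := ((hexp s y).const_mul (C * s * s)).add ((hexp (-s) y).const_mul (D * s * s))
        exact h.congr_deriv (by ring)
      show deriv^[2] _ x < 0
      rw [Function.iterate_succ, Function.iterate_one, Function.comp_apply] at *
      rw [hg1f, (hg2 x).deriv]
      have e1 : 0 < Real.exp (x * s) := Real.exp_pos _
      have e2 : 0 < Real.exp (x * (-s)) := Real.exp_pos _
      nlinarith [mul_pos (mul_pos (mul_pos hs hs) hs) e1,
        mul_pos (mul_pos (mul_pos hs hs) hs) e2]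
  · intro G hG
    have hGquad : 0 < C * s * Real.exp (G * s) ^ 2 + k * Real.exp (G * s) - D * s := by
      rw [hdU G] at hG
      have hinv : Real.exp (G * (-s)) = (Real.exp (G * s))⁻¹ := by
        rw [mul_neg, Real.exp_neg]
      rw [hinv] at hG
      have hpos : (0 : ℝ) < Real.exp (G * s) := Real.exp_pos _
      have hi : (Real.exp (G * s))⁻¹ * Real.exp (G * s) = 1 := inv_mul_cancel₀ hpos.ne'
      have h := mul_pos hG hpos
      calc (0:ℝ) < (k + C * s * Real.exp (G * s) - D * s * (Real.exp (G * s))⁻¹)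
            * Real.exp (G * s) := h
        _ = C * s * Real.exp (G * s) ^ 2 + k * Real.exp (G * s) - D * s := by
            linear_combination (-(D * s)) * hi
    have main : ∀ x₁ ∈ Set.Iio G, ∀ x₂ ∈ Set.Iio G,
        deriv U x₁ = 0 → deriv U x₂ = 0 → x₁ = x₂ := by
      intro x₁ hx₁ x₂ hx₂ h1 h2
      by_contra hne
      have hlt1 : Real.exp (x₁ * s) < Real.exp (G * s) :=
        Real.exp_lt_exp.2 (by exact mul_lt_mul_of_pos_right hx₁ hs)
      have hlt2 : Real.exp (x₂ * s) < Real.exp (G * s) :=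
        Real.exp_lt_exp.2 (by exact mul_lt_mul_of_pos_right hx₂ hs)
      exact quad_aux2 s k C D _ _ _ hs hk (Real.exp_pos _) (Real.exp_pos _)
        (hexpne x₁ x₂ hne) hlt1 hlt2 (hquad x₁ h1) (hquad x₂ h2) hGquad
    refine ⟨main, ?_⟩
    intro F _ x₁ hx₁ x₂ hx₂ h1 h2
    exact main x₁ hx₁.2 x₂ hx₂.2 h1 h2
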